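/- Fix p ≥ 2. Let a₀,…,a_n, b : ℂ → ℂ be holomorphic with a₀(w)^p − Σ_{j=1}^n a_j(w)^p = 0 for all w, and let u : Ω → ℂ be a C^p function implicitly defined by Σ_μ a_μ(u)x_μ − b(u) = 0 with δ' nonvanishing. Then for every k with 1 ≤ k ≤ p, u satisfies the higher-order equation □_p(u^k) := ∂₀^p(u^k) − Σ_{j=1}^n ∂ⱼ^p(u^k) = 0. -/

import Mathlib

/-- Partial derivative in the μ-th coordinate direction. -/
noncomputable def pd {n : ℕ} (μ : Fin (n+1)) (u : (Fin (n+1) → ℝ) → ℂ) :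
    (Fin (n+1) → ℝ) → ℂ :=
  fun x => fderiv ℝ u x (Pi.single μ 1)

/-- The higher-order operator □_p = ∂₀^p − Σ_{j=1}^n ∂ⱼ^p on ℝ^{1+n}. -/
noncomputable def boxp {n : ℕ} (p : ℕ) (u : (Fin (n+1) → ℝ) → ℂ) :
    (Fin (n+1) → ℝ) → ℂ :=
  fun x => (pd 0)^[p] u x - ∑ j : Fin n, (pd j.succ)^[p] u x

namespace SS

abbrev TV (n : ℕ) := ℂ → (Fin (n+1) → ℝ) → ℂ

variable {n : ℕ}

lemma entire_deriv {c : ℂ → ℂ} (hc : Differentiable ℂ c) : Differentiable ℂ (deriv c) :=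
  (contDiff_infty_iff_deriv.mp hc.contDiff).2.differentiable (by simp)

lemma entire_iter {c : ℂ → ℂ} (hc : Differentiable ℂ c) (s : ℕ) :
    Differentiable ℂ (deriv^[s] c) := by
  induction s with
  | zero => exact hc
  | succ s ih => rw [Function.iterate_succ_apply']; exact entire_deriv ih

noncomputable def dW (g : ℂ → (Fin (n+1) → ℝ) → ℂ) : ℂ → (Fin (n+1) → ℝ) → ℂ :=
  fun w x => deriv (fun z => g z x) w

noncomputable def dX (μ : Fin (n+1)) (g : ℂ → (Fin (n+1) → ℝ) → ℂ) :
    ℂ → (Fin (n+1) → ℝ) → ℂ :=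
  fun w x => fderiv ℝ (g w) x (Pi.single μ 1)

inductive P : (ℂ → (Fin (n+1) → ℝ) → ℂ) → Prop
  | ent (c : ℂ → ℂ) (hc : Differentiable ℂ c) : P (fun w _ => c w)
  | coord (ν : Fin (n+1)) : P (fun _ x => (x ν : ℂ))
  | add {g h : TV n} (hg : P g) (hh : P h) : P (fun w x => g w x + h w x)
  | mul {g h : TV n} (hg : P g) (hh : P h) : P (fun w x => g w x * h w x)

lemma P.diffW {g : TV n} (hg : P g) (x : Fin (n+1) → ℝ) : Differentiable ℂ (fun w => g w x) := by
  induction hg with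
  | ent c hc => exact hc
  | coord ν => exact differentiable_const _
  | add hg hh ih1 ih2 => exact ih1.add ih2
  | mul hg hh ih1 ih2 => exact ih1.mul ih2

lemma P.diffX {g : TV n} (hg : P g) (w : ℂ) : Differentiable ℝ (g w) := by
  induction hg with
  | ent c hc => exact differentiable_const _
  | coord ν =>
    exact Complex.ofRealCLM.differentiable.comp (differentiable_apply ν)
  | add hg hh ih1 ih2 => exact ih1.add ih2
  | mul hg hh ih1 ih2 => exact ih1.mul ih2

lemma dW_add {g h : TV n} (hg : P g) (hh : P h) (w x) :
    dW (fun w x => g w x + h w x) w x = dW g w x + dW h w x :=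
  deriv_add ((hg.diffW x).differentiableAt) ((hh.diffW x).differentiableAt)

lemma dW_mul {g h : TV n} (hg : P g) (hh : P h) (w x) :
    dW (fun w x => g w x * h w x) w x = dW g w x * h w x + g w x * dW h w x :=
  deriv_mul ((hg.diffW x).differentiableAt) ((hh.diffW x).differentiableAt)

lemma dW_sub {g h : TV n} (hg : P g) (hh : P h) (w x) :
    dW (fun w x => g w x - h w x) w x = dW g w x - dW h w x :=
  deriv_sub ((hg.diffW x).differentiableAt) ((hh.diffW x).differentiableAt)

lemma dW_const_mul {g : TV n} (hg : P g) (c : ℂ) (w x) :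
    dW (fun w x => c * g w x) w x = c * dW g w x :=
  deriv_const_mul c ((hg.diffW x).differentiableAt)

lemma dW_ent (c : ℂ → ℂ) : dW (n := n) (fun w _ => c w) = fun w _ => deriv c w := rfl

lemma dW_const (k : ℂ) : dW (n := n) (fun _ _ => k) = fun _ _ => 0 := by
  funext w x; exact deriv_const _ _

lemma dW_coord (ν : Fin (n+1)) : dW (fun _ x => (x ν : ℂ)) = fun _ _ => 0 := by
  funext w x; exact deriv_const _ _

lemma dX_add {g h : TV n} (μ : Fin (n+1)) (hg : P g) (hh : P h) (w x) :
    dX μ (fun w x => g w x + h w x) w x = dX μ g w x + dX μ h w x := by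
  show fderiv ℝ (fun x => g w x + h w x) x (Pi.single μ 1) = _
  rw [fderiv_fun_add ((hg.diffX w).differentiableAt) ((hh.diffX w).differentiableAt)]
  rfl

lemma dX_mul {g h : TV n} (μ : Fin (n+1)) (hg : P g) (hh : P h) (w x) :
    dX μ (fun w x => g w x * h w x) w x
      = dX μ g w x * h w x + g w x * dX μ h w x := by
  show fderiv ℝ (fun x => g w x * h w x) x (Pi.single μ 1) = _
  rw [fderiv_fun_mul ((hg.diffX w).differentiableAt) ((hh.diffX w).differentiableAt)]
  simp only [ContinuousLinearMap.add_apply, ContinuousLinearMap.smul_apply, smul_eq_mul]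
  show g w x * dX μ h w x + h w x * dX μ g w x = _
  ring

lemma dX_sub {g h : TV n} (μ : Fin (n+1)) (hg : P g) (hh : P h) (w x) :
    dX μ (fun w x => g w x - h w x) w x = dX μ g w x - dX μ h w x := by
  show fderiv ℝ (fun x => g w x - h w x) x (Pi.single μ 1) = _
  rw [fderiv_fun_sub ((hg.diffX w).differentiableAt) ((hh.diffX w).differentiableAt)]
  rfl

lemma dX_const_mul {g : TV n} (μ : Fin (n+1)) (hg : P g) (c : ℂ) (w x) :
    dX μ (fun w x => c * g w x) w x = c * dX μ g w x := by
  show fderiv ℝ (fun x => c * g w x) x (Pi.single μ 1) = _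
  rw [fderiv_const_mul ((hg.diffX w).differentiableAt)]
  rfl

lemma dX_ent (μ : Fin (n+1)) (c : ℂ → ℂ) :
    dX (n := n) μ (fun w _ => c w) = fun _ _ => 0 := by
  funext w x
  show fderiv ℝ (fun _ => c w) x (Pi.single μ 1) = 0
  rw [fderiv_fun_const]; rfl

lemma dX_const (μ : Fin (n+1)) (k : ℂ) : dX (n := n) μ (fun _ _ => k) = fun _ _ => 0 := by
  funext w x
  show fderiv ℝ (fun _ => k) x (Pi.single μ 1) = 0
  rw [fderiv_fun_const]; rfl

lemma hasFDerivAt_coordC (ν : Fin (n+1)) (x : Fin (n+1) → ℝ) :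
    HasFDerivAt (fun x : Fin (n+1) → ℝ => ((x ν : ℝ) : ℂ))
      (Complex.ofRealCLM.comp (ContinuousLinearMap.proj ν)) x :=
  (Complex.ofRealCLM.comp (ContinuousLinearMap.proj (φ := fun _ : Fin (n+1) => ℝ) ν)).hasFDerivAt

lemma dX_coord (μ ν : Fin (n+1)) :
    dX μ (fun _ x => (x ν : ℂ)) = fun _ _ => if ν = μ then 1 else 0 := by
  funext w x
  show fderiv ℝ (fun x : Fin (n+1) → ℝ => ((x ν : ℝ) : ℂ)) x (Pi.single μ 1) = _
  rw [(hasFDerivAt_coordC ν x).fderiv]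
  simp only [ContinuousLinearMap.comp_apply, ContinuousLinearMap.proj_apply,
    Pi.single_apply]
  split <;> simp

lemma PdW {g : TV n} (hg : P g) : P (dW g) := by
  induction hg with
  | ent c hc => rw [dW_ent]; exact P.ent _ (entire_deriv hc)
  | coord ν => rw [dW_coord]; exact P.ent (fun _ => 0) (differentiable_const 0)
  | @add g h hg hh ih1 ih2 =>
    rw [funext fun w => funext fun x => dW_add hg hh w x]
    exact ih1.add ih2
  | @mul g h hg hh ih1 ih2 =>
    rw [funext fun w => funext fun x => dW_mul hg hh w x]
    exact (ih1.mul hh).add (hg.mul ih2)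

lemma PdX {g : TV n} (hg : P g) (μ : Fin (n+1)) : P (dX μ g) := by
  induction hg with
  | ent c hc => rw [dX_ent]; exact P.ent (fun _ => 0) (differentiable_const 0)
  | coord ν => rw [dX_coord]; exact P.ent (fun _ => _) (differentiable_const _)
  | @add g h hg hh ih1 ih2 =>
    rw [funext fun w => funext fun x => dX_add μ hg hh w x]
    exact ih1.add ih2
  | @mul g h hg hh ih1 ih2 =>
    rw [funext fun w => funext fun x => dX_mul μ hg hh w x]
    exact (ih1.mul hh).add (hg.mul ih2)

lemma P.const_mul {g : TV n} (hg : P g) (c : ℂ) : P (fun w x => c * g w x) :=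
  (P.ent (fun _ => c) (differentiable_const c)).mul hg

lemma P.sub {g h : TV n} (hg : P g) (hh : P h) : P (fun w x => g w x - h w x) := by
  have e : (fun w x => g w x - h w x) = fun w x => g w x + (-1 : ℂ) * h w x := by
    funext w x; ring
  rw [e]; exact hg.add (hh.const_mul (-1))

lemma P.sum {ι : Type*} (s : Finset ι) (f : ι → TV n) (hf : ∀ i ∈ s, P (f i)) :
    P (fun w x => ∑ i ∈ s, f i w x) := by
  classical
  induction s using Finset.induction with
  | empty => simp only [Finset.sum_empty]; exact P.ent (fun _ => 0) (differentiable_const 0)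
  | insert _ _ hnot ih =>
    simp only [Finset.sum_insert hnot]
    exact (hf _ (Finset.mem_insert_self _ _)).add
      (ih fun i hi => hf i (Finset.mem_insert_of_mem hi))

lemma P.comm {g : TV n} (hg : P g) (μ : Fin (n+1)) : dX μ (dW g) = dW (dX μ g) := by
  induction hg with
  | ent c hc => rw [dW_ent, dX_ent, dX_ent, dW_const]
  | coord ν => rw [dW_coord, dX_const, dX_coord, dW_const]
  | @add g h hg hh ih1 ih2 =>
    rw [funext fun w => funext fun x => dW_add hg hh w x,
      funext fun w => funext fun x => dX_add μ hg hh w x,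
      funext fun w => funext fun x => dX_add μ (PdW hg) (PdW hh) w x,
      funext fun w => funext fun x => dW_add (PdX hg μ) (PdX hh μ) w x, ih1, ih2]
  | @mul g h hg hh ih1 ih2 =>
    rw [funext fun w => funext fun x => dW_mul hg hh w x,
      funext fun w => funext fun x => dX_mul μ hg hh w x]
    rw [funext fun w => funext fun x => dX_add μ ((PdW hg).mul hh) (hg.mul (PdW hh)) w x,
      funext fun w => funext fun x => dW_add ((PdX hg μ).mul hh) (hg.mul (PdX hh μ)) w x]
    rw [funext fun w => funext fun x => dX_mul μ (PdW hg) hh w x,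
      funext fun w => funext fun x => dX_mul μ hg (PdW hh) w x,
      funext fun w => funext fun x => dW_mul (PdX hg μ) hh w x,
      funext fun w => funext fun x => dW_mul hg (PdX hh μ) w x,
      ih1, ih2]
    funext w x; ring

lemma P.comp_hasFDerivAt {g : TV n} (hg : P g) {u : (Fin (n+1) → ℝ) → ℂ}
    {U : (Fin (n+1) → ℝ) →L[ℝ] ℂ} {x : Fin (n+1) → ℝ} (hu : HasFDerivAt u U x) :
    HasFDerivAt (fun y => g (u y) y) (dW g (u x) x • U + fderiv ℝ (g (u x)) x) x := by
  induction hg with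
  | ent c hc =>
    have h1 : HasFDerivAt (fun y => c (u y)) (deriv c (u x) • U) x :=
      (hc (u x)).hasDerivAt.comp_hasFDerivAt x hu
    have h2 : fderiv ℝ (fun _ : Fin (n+1) → ℝ => c (u x)) x = 0 := fderiv_const_apply _
    simpa [dW, h2] using h1
  | coord ν =>
    have h1 := hasFDerivAt_coordC (n := n) ν x
    have h2 : dW (fun _ x => ((x ν : ℝ) : ℂ)) (u x) x = 0 := deriv_const _ _
    refine h1.congr_fderiv ?_
    symm
    rw [h2]
    show (0:ℂ) • U + fderiv ℝ (fun x' : Fin (n+1) → ℝ => ((x' ν : ℝ):ℂ)) x = _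
    rw [h1.fderiv]
    ext v
    simp
  | @add g h hg hh ih1 ih2 =>
    have h3 := ih1.fun_add ih2
    refine h3.congr_fderiv ?_
    symm
    have e1 : fderiv ℝ (fun x' => g (u x) x' + h (u x) x') x
        = fderiv ℝ (g (u x)) x + fderiv ℝ (h (u x)) x :=
      fderiv_fun_add ((hg.diffX _).differentiableAt) ((hh.diffX _).differentiableAt)
    show dW (fun w x => g w x + h w x) (u x) x • U
        + fderiv ℝ (fun x' => g (u x) x' + h (u x) x') x = _
    rw [dW_add hg hh, e1]
    ext v
    simp only [ContinuousLinearMap.add_apply, ContinuousLinearMap.smul_apply, smul_eq_mul]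
    ring
  | @mul g h hg hh ih1 ih2 =>
    have h3 := ih1.fun_mul ih2
    refine h3.congr_fderiv ?_
    symm
    have e1 : fderiv ℝ (fun x' => g (u x) x' * h (u x) x') x
        = g (u x) x • fderiv ℝ (h (u x)) x + h (u x) x • fderiv ℝ (g (u x)) x :=
      fderiv_fun_mul ((hg.diffX _).differentiableAt) ((hh.diffX _).differentiableAt)
    show dW (fun w x => g w x * h w x) (u x) x • U
        + fderiv ℝ (fun x' => g (u x) x' * h (u x) x') x = _
    rw [dW_mul hg hh, e1]
    ext v
    simp only [ContinuousLinearMap.add_apply, ContinuousLinearMap.smul_apply, smul_eq_mul]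
    ring

lemma pd_comp {g : TV n} (hg : P g) {u : (Fin (n+1) → ℝ) → ℂ} {x : Fin (n+1) → ℝ}
    (hd : DifferentiableAt ℝ u x) (μ : Fin (n+1)) :
    pd μ (fun y => g (u y) y) x
      = dW g (u x) x * fderiv ℝ u x (Pi.single μ 1) + dX μ g (u x) x := by
  have h := hg.comp_hasFDerivAt hd.hasFDerivAt
  show fderiv ℝ (fun y => g (u y) y) x (Pi.single μ 1) = _
  rw [h.fderiv]
  simp only [ContinuousLinearMap.add_apply, ContinuousLinearMap.smul_apply, smul_eq_mul]
  rfl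

section Context

variable (a : Fin (n+1) → ℂ → ℂ) (b : ℂ → ℂ)

noncomputable def dd (s : ℕ) : TV n :=
  fun w x => ∑ ν, deriv^[s] (a ν) w * (x ν : ℂ) - deriv^[s] b w

noncomputable def NN : ℕ → (ℂ → ℂ) → TV n
  | 0, h => fun w _ => h w
  | m+1, h => fun w x => dW (NN m h) w x * dd a b 1 w x
      - (2 * (m : ℂ) + 1) * (NN m h w x * dd a b 2 w x)

variable {a} {b} (ha : ∀ μ, Differentiable ℂ (a μ)) (hb : Differentiable ℂ b)
include ha hb

lemma P_dd (s : ℕ) : P (dd a b s) := by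
  show P (fun w x => (∑ ν, deriv^[s] (a ν) w * (x ν : ℂ)) - deriv^[s] b w)
  exact P.sub
    (P.sum Finset.univ (fun ν => fun w x => deriv^[s] (a ν) w * (x ν : ℂ))
      (fun ν _ => (P.ent _ (entire_iter (ha ν) s)).mul (P.coord ν)))
    (P.ent _ (entire_iter hb s))

lemma dW_dd (s : ℕ) : dW (dd a b s) = dd a b (s+1) := by
  funext w x
  have hA : ∀ ν ∈ Finset.univ, DifferentiableAt ℂ (fun z => deriv^[s] (a ν) z * (x ν : ℂ)) w :=
    fun ν _ => ((entire_iter (ha ν) s).differentiableAt).mul_const _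
  show deriv (fun z => ∑ ν, deriv^[s] (a ν) z * (x ν : ℂ) - deriv^[s] b z) w = _
  rw [deriv_fun_sub (DifferentiableAt.fun_sum hA) ((entire_iter hb s).differentiableAt),
    deriv_fun_sum hA]
  show _ = ∑ ν, deriv^[s+1] (a ν) w * (x ν : ℂ) - deriv^[s+1] b w
  simp only [Function.iterate_succ_apply']
  congr 1
  refine Finset.sum_congr rfl fun ν _ => ?_
  rw [deriv_mul_const ((entire_iter (ha ν) s).differentiableAt)]

lemma dX_dd (μ : Fin (n+1)) (s : ℕ) :
    dX μ (dd a b s) = fun w _ => deriv^[s] (a μ) w := by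
  funext w x
  have h1 : HasFDerivAt (fun x : Fin (n+1) → ℝ => ∑ ν, deriv^[s] (a ν) w * (x ν : ℂ) - deriv^[s] b w)
      (∑ ν, deriv^[s] (a ν) w • (Complex.ofRealCLM.comp (ContinuousLinearMap.proj ν))) x := by
    exact (HasFDerivAt.fun_sum
      (fun ν _ => ((hasFDerivAt_coordC ν x).const_mul (deriv^[s] (a ν) w)))).sub_const _
  show fderiv ℝ (fun x : Fin (n+1) → ℝ =>
      ∑ ν, deriv^[s] (a ν) w * (x ν : ℂ) - deriv^[s] b w) x (Pi.single μ 1) = _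
  rw [h1.fderiv]
  simp only [ContinuousLinearMap.sum_apply, ContinuousLinearMap.smul_apply,
    ContinuousLinearMap.comp_apply, ContinuousLinearMap.proj_apply, smul_eq_mul,
    Pi.single_apply]
  simp only [apply_ite Complex.ofRealCLM, map_one, map_zero, mul_ite, mul_one, mul_zero]
  simp [Finset.sum_ite_eq']

lemma P_NN {h : ℂ → ℂ} (hh : Differentiable ℂ h) (m : ℕ) : P (NN a b m h) := by
  induction m with
  | zero => exact P.ent _ hh
  | succ m ih =>
    show P (fun w x => dW (NN a b m h) w x * dd a b 1 w x
      - (2 * (m : ℂ) + 1) * (NN a b m h w x * dd a b 2 w x))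
    exact ((PdW ih).mul (P_dd ha hb 1)).sub ((ih.mul (P_dd ha hb 2)).const_mul _)

lemma NN_zero (m : ℕ) : NN a b m (fun _ => (0:ℂ)) = fun _ _ => 0 := by
  induction m with
  | zero => rfl
  | succ m ih =>
    funext w x
    show dW (NN a b m fun _ => 0) w x * _ - (2 * (m : ℂ) + 1) * (NN a b m (fun _ => 0) w x * _) = 0
    rw [ih, dW_const]
    simp

lemma NN_add {h₁ h₂ : ℂ → ℂ} (H1 : Differentiable ℂ h₁) (H2 : Differentiable ℂ h₂) (m : ℕ) :
    NN a b m (fun z => h₁ z + h₂ z) = fun w x => NN a b m h₁ w x + NN a b m h₂ w x := by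
  induction m with
  | zero => rfl
  | succ m ih =>
    funext w x
    show dW (NN a b m fun z => h₁ z + h₂ z) w x * dd a b 1 w x
        - (2 * (m : ℂ) + 1) * (NN a b m (fun z => h₁ z + h₂ z) w x * dd a b 2 w x)
      = (dW (NN a b m h₁) w x * dd a b 1 w x
          - (2 * (m : ℂ) + 1) * (NN a b m h₁ w x * dd a b 2 w x))
        + (dW (NN a b m h₂) w x * dd a b 1 w x
          - (2 * (m : ℂ) + 1) * (NN a b m h₂ w x * dd a b 2 w x))
    rw [ih, dW_add (P_NN ha hb H1 m) (P_NN ha hb H2 m)]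
    ring

lemma NN_const_mul {h : ℂ → ℂ} (H : Differentiable ℂ h) (c : ℂ) (m : ℕ) :
    NN a b m (fun z => c * h z) = fun w x => c * NN a b m h w x := by
  induction m with
  | zero => rfl
  | succ m ih =>
    funext w x
    show dW (NN a b m fun z => c * h z) w x * dd a b 1 w x
        - (2 * (m : ℂ) + 1) * (NN a b m (fun z => c * h z) w x * dd a b 2 w x)
      = c * (dW (NN a b m h) w x * dd a b 1 w x
          - (2 * (m : ℂ) + 1) * (NN a b m h w x * dd a b 2 w x))
    rw [ih, dW_const_mul (P_NN ha hb H m)]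
    ring

lemma NN_sub {h₁ h₂ : ℂ → ℂ} (H1 : Differentiable ℂ h₁) (H2 : Differentiable ℂ h₂) (m : ℕ) :
    NN a b m (fun z => h₁ z - h₂ z) = fun w x => NN a b m h₁ w x - NN a b m h₂ w x := by
  have e : (fun z => h₁ z - h₂ z) = fun z => h₁ z + (-1:ℂ) * h₂ z := by funext z; ring
  rw [e, NN_add ha hb H1 ((differentiable_const _).fun_mul H2) m, NN_const_mul ha hb H2 (-1) m]
  funext w x; ring

lemma NN_sum {ι : Type*} (s : Finset ι) (h : ι → ℂ → ℂ)
    (hf : ∀ i ∈ s, Differentiable ℂ (h i)) (m : ℕ) :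
    NN a b m (fun z => ∑ i ∈ s, h i z) = fun w x => ∑ i ∈ s, NN a b m (h i) w x := by
  classical
  induction s using Finset.induction with
  | empty =>
    have e : (fun z => ∑ i ∈ (∅ : Finset ι), h i z) = fun _ => (0:ℂ) := by
      funext z; simp
    rw [e, NN_zero ha hb]
    funext w x; simp
  | @insert i s hnot ih =>
    have e : (fun z => ∑ j ∈ insert i s, h j z)
        = fun z => h i z + ∑ j ∈ s, h j z := by
      funext z; rw [Finset.sum_insert hnot]
    have hs : Differentiable ℂ (fun z => ∑ j ∈ s, h j z) :=
      Differentiable.fun_sum fun j hj => hf j (Finset.mem_insert_of_mem hj)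
    rw [e, NN_add ha hb (hf i (Finset.mem_insert_self i s)) hs m,
      ih fun j hj => hf j (Finset.mem_insert_of_mem hj)]
    funext w x; simp [Finset.sum_insert hnot]

lemma claimC (μ : Fin (n+1)) {h : ℂ → ℂ} (hh : Differentiable ℂ h) (m : ℕ) :
    ∀ w x, a μ w * NN a b (m+1) h w x - NN a b (m+1) (fun z => a μ z * h z) w x
      = dd a b 1 w x * (dX μ (NN a b m h) w x * dd a b 1 w x
          - (2 * (m : ℂ) + 1) * (deriv (a μ) w * NN a b m h w x)) := by
  have hh₂ : Differentiable ℂ (fun z => a μ z * h z) := (ha μ).mul hh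
  induction m with
  | zero =>
    intro w x
    have e1 : NN a b 1 h w x
        = deriv h w * dd a b 1 w x - (2 * ((0:ℕ) : ℂ) + 1) * (h w * dd a b 2 w x) := rfl
    have e2 : NN a b 1 (fun z => a μ z * h z) w x
        = deriv (fun z => a μ z * h z) w * dd a b 1 w x
          - (2 * ((0:ℕ) : ℂ) + 1) * (a μ w * h w * dd a b 2 w x) := rfl
    have e3 : deriv (fun z => a μ z * h z) w = deriv (a μ) w * h w + a μ w * deriv h w :=
      deriv_mul ((ha μ).differentiableAt) (hh.differentiableAt)
    have e4 : dX μ (NN a b 0 h) w x = 0 := by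
      have := congrFun (congrFun (dX_ent (n := n) μ h) w) x
      exact this
    rw [e1, e2, e3, e4]
    show _ = dd a b 1 w x * (0 * dd a b 1 w x - (2 * ((0:ℕ):ℂ) + 1) * (deriv (a μ) w * h w))
    push_cast
    ring
  | succ m ih =>
    intro w x
    set h₂ : ℂ → ℂ := fun z => a μ z * h z with hh₂def
    have hPA : P (NN a b m h) := P_NN ha hb hh m
    have hPB : P (NN a b m h₂) := P_NN ha hb hh₂ m
    have hPA1 : P (NN a b (m+1) h) := P_NN ha hb hh (m+1)
    have hPB1 : P (NN a b (m+1) h₂) := P_NN ha hb hh₂ (m+1)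
    have Pd1 : P (dd a b 1) := P_dd ha hb 1
    have Pd2 : P (dd a b 2) := P_dd ha hb 2
    -- rewrite dd derivatives
    have eD1 : dW (dd a b 1) w x = dd a b 2 w x := by
      rw [congrFun (congrFun (dW_dd ha hb 1) w) x]
    have eD2 : dW (dd a b 2) w x = dd a b 3 w x := by
      rw [congrFun (congrFun (dW_dd ha hb 2) w) x]
    have eX1 : dX μ (dd a b 1) w x = deriv (a μ) w := by
      rw [congrFun (congrFun (dX_dd ha hb μ 1) w) x]
      simp
    have eX2 : dX μ (dd a b 2) w x = deriv (deriv (a μ)) w := by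
      rw [congrFun (congrFun (dX_dd ha hb μ 2) w) x]
      simp [Function.iterate_succ_apply']
    -- expansion of dW (NN (m+1) ·)
    have e_dWN1 : ∀ (h' : ℂ → ℂ), P (NN a b m h') →
        dW (NN a b (m+1) h') w x
        = dW (dW (NN a b m h')) w x * dd a b 1 w x + dW (NN a b m h') w x * dd a b 2 w x
          - (2 * (m:ℂ) + 1) * (dW (NN a b m h') w x * dd a b 2 w x
              + NN a b m h' w x * dd a b 3 w x) := by
      intro h' hP
      have e0 : NN a b (m+1) h' = fun w x => dW (NN a b m h') w x * dd a b 1 w x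
          - (2 * (m:ℂ) + 1) * (NN a b m h' w x * dd a b 2 w x) := rfl
      rw [e0, dW_sub ((PdW hP).mul Pd1) ((hP.mul Pd2).const_mul _) w x,
        dW_mul (PdW hP) Pd1 w x, dW_const_mul (hP.mul Pd2) _ w x, dW_mul hP Pd2 w x,
        eD1, eD2]
    -- expansion of dX (NN (m+1) ·)
    have e_dXN1 : ∀ (h' : ℂ → ℂ), P (NN a b m h') →
        dX μ (NN a b (m+1) h') w x
        = dW (dX μ (NN a b m h')) w x * dd a b 1 w x
            + dW (NN a b m h') w x * deriv (a μ) w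
          - (2 * (m:ℂ) + 1) * (dX μ (NN a b m h') w x * dd a b 2 w x
              + NN a b m h' w x * deriv (deriv (a μ)) w) := by
      intro h' hP
      have e0 : NN a b (m+1) h' = fun w x => dW (NN a b m h') w x * dd a b 1 w x
          - (2 * (m:ℂ) + 1) * (NN a b m h' w x * dd a b 2 w x) := rfl
      have ecomm : dX μ (dW (NN a b m h')) w x = dW (dX μ (NN a b m h')) w x := by
        rw [congrFun (congrFun (P.comm hP μ) w) x]
      rw [e0, dX_sub μ ((PdW hP).mul Pd1) ((hP.mul Pd2).const_mul _) w x,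
        dX_mul μ (PdW hP) Pd1 w x, dX_const_mul μ (hP.mul Pd2) _ w x, dX_mul μ hP Pd2 w x,
        eX1, eX2, ecomm]
    -- derivative in w of the induction hypothesis
    have hfun : (fun w' => a μ w' * NN a b (m+1) h w' x - NN a b (m+1) h₂ w' x)
        = (fun w' => dd a b 1 w' x * (dX μ (NN a b m h) w' x * dd a b 1 w' x
            - (2 * (m : ℂ) + 1) * (deriv (a μ) w' * NN a b m h w' x))) :=
      funext fun w' => ih w' x
    have Haμ : HasDerivAt (a μ) (deriv (a μ) w) w := ((ha μ).differentiableAt).hasDerivAt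
    have Haμ' : HasDerivAt (deriv (a μ)) (deriv (deriv (a μ)) w) w :=
      ((entire_deriv (ha μ)).differentiableAt).hasDerivAt
    have HN1 : HasDerivAt (fun w' => NN a b (m+1) h w' x) (dW (NN a b (m+1) h) w x) w :=
      ((hPA1.diffW x).differentiableAt).hasDerivAt
    have HN1b : HasDerivAt (fun w' => NN a b (m+1) h₂ w' x) (dW (NN a b (m+1) h₂) w x) w :=
      ((hPB1.diffW x).differentiableAt).hasDerivAt
    have HA : HasDerivAt (fun w' => NN a b m h w' x) (dW (NN a b m h) w x) w :=
      ((hPA.diffW x).differentiableAt).hasDerivAt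
    have HAx : HasDerivAt (fun w' => dX μ (NN a b m h) w' x) (dW (dX μ (NN a b m h)) w x) w :=
      (((PdX hPA μ).diffW x).differentiableAt).hasDerivAt
    have HD1 : HasDerivAt (fun w' => dd a b 1 w' x) (dd a b 2 w x) w := by
      have h0 := ((Pd1.diffW x).differentiableAt (x := w)).hasDerivAt
      rwa [show deriv (fun w' => dd a b 1 w' x) w = dd a b 2 w x from eD1] at h0
    have HL : HasDerivAt (fun w' => a μ w' * NN a b (m+1) h w' x - NN a b (m+1) h₂ w' x)
        (deriv (a μ) w * NN a b (m+1) h w x + a μ w * dW (NN a b (m+1) h) w x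
          - dW (NN a b (m+1) h₂) w x) w := by
      exact ((Haμ.mul HN1).sub HN1b)
    have HR : HasDerivAt (fun w' => dd a b 1 w' x * (dX μ (NN a b m h) w' x * dd a b 1 w' x
          - (2 * (m : ℂ) + 1) * (deriv (a μ) w' * NN a b m h w' x)))
        (dd a b 2 w x * (dX μ (NN a b m h) w x * dd a b 1 w x
            - (2 * (m : ℂ) + 1) * (deriv (a μ) w * NN a b m h w x))
          + dd a b 1 w x * ((dW (dX μ (NN a b m h)) w x * dd a b 1 w x
                + dX μ (NN a b m h) w x * dd a b 2 w x)
              - (2 * (m : ℂ) + 1) * (deriv (deriv (a μ)) w * NN a b m h w x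
                + deriv (a μ) w * dW (NN a b m h) w x))) w := by
      exact HD1.mul ((HAx.mul HD1).sub (((Haμ'.mul HA)).const_mul _))
    have eq2 := (hfun ▸ HL).unique HR
    -- atom-level rewrites
    have e_N1h : NN a b (m+1) h w x = dW (NN a b m h) w x * dd a b 1 w x
        - (2 * (m:ℂ) + 1) * (NN a b m h w x * dd a b 2 w x) := rfl
    have e_N1b : NN a b (m+1) h₂ w x = dW (NN a b m h₂) w x * dd a b 1 w x
        - (2 * (m:ℂ) + 1) * (NN a b m h₂ w x * dd a b 2 w x) := rfl
    have ihx := ih w x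
    rw [e_N1h, e_N1b] at ihx
    rw [e_N1h, e_dWN1 h hPA, e_dWN1 h₂ hPB] at eq2
    -- the goal
    show a μ w * NN a b (m+1+1) h w x - NN a b (m+1+1) h₂ w x
      = dd a b 1 w x * (dX μ (NN a b (m+1) h) w x * dd a b 1 w x
          - (2 * ((m+1 : ℕ) : ℂ) + 1) * (deriv (a μ) w * NN a b (m+1) h w x))
    have e_N2h : NN a b (m+1+1) h w x = dW (NN a b (m+1) h) w x * dd a b 1 w x
        - (2 * ((m:ℂ)+1) + 1) * (NN a b (m+1) h w x * dd a b 2 w x) := by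
      have e0 : NN a b (m+1+1) h w x = dW (NN a b (m+1) h) w x * dd a b 1 w x
          - (2 * ((m+1:ℕ):ℂ) + 1) * (NN a b (m+1) h w x * dd a b 2 w x) := rfl
      rw [e0]; push_cast; ring
    have e_N2b : NN a b (m+1+1) h₂ w x = dW (NN a b (m+1) h₂) w x * dd a b 1 w x
        - (2 * ((m:ℂ)+1) + 1) * (NN a b (m+1) h₂ w x * dd a b 2 w x) := by
      have e0 : NN a b (m+1+1) h₂ w x = dW (NN a b (m+1) h₂) w x * dd a b 1 w x
          - (2 * ((m+1:ℕ):ℂ) + 1) * (NN a b (m+1) h₂ w x * dd a b 2 w x) := rfl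
      rw [e0]; push_cast; ring
    rw [e_N2h, e_N2b, e_dWN1 h hPA, e_dWN1 h₂ hPB, e_dXN1 h hPA, e_N1h, e_N1b]
    push_cast
    linear_combination dd a b 1 w x * eq2 - (2*(m:ℂ)+3) * dd a b 2 w x * ihx

end Context

end SS

open SS in
theorem stmt10 {n : ℕ} (p : ℕ) (hp : 2 ≤ p)
    (a : Fin (n+1) → ℂ → ℂ) (b : ℂ → ℂ)
    (ha : ∀ μ, Differentiable ℂ (a μ)) (hb : Differentiable ℂ b)
    (hconstraint : ∀ w : ℂ, (a 0 w)^p - ∑ j : Fin n, (a j.succ w)^p = 0)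
    (Ω : Set (Fin (n+1) → ℝ)) (hΩ : IsOpen Ω)
    (u : (Fin (n+1) → ℝ) → ℂ) (hu : ContDiffOn ℝ p u Ω)
    (himp : ∀ x ∈ Ω, ∑ μ, a μ (u x) * (x μ : ℂ) - b (u x) = 0)
    (hδ' : ∀ x ∈ Ω, ∑ μ, deriv (a μ) (u x) * (x μ : ℂ) - deriv b (u x) ≠ 0) :
    ∀ k : ℕ, 1 ≤ k → k ≤ p → ∀ x ∈ Ω, boxp p (fun y => (u y)^k) x = 0 := by
  intro k hk1 hkp x hx
  -- basic facts
  have hud : ∀ y ∈ Ω, DifferentiableAt ℝ u y := by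
    intro y hy
    have h1 : (1 : WithTop ℕ∞) ≤ (p : ℕ∞) := by
      exact_mod_cast Nat.one_le_cast.mpr (by omega)
    exact (hu.differentiableOn (by exact_mod_cast (show p ≠ 0 by omega))).differentiableAt (hΩ.mem_nhds hy)
  have hd1 : ∀ y ∈ Ω, dd a b 1 (u y) y ≠ 0 := by
    intro y hy
    have := hδ' y hy
    simpa [dd] using this
  have hdu : ∀ (μ : Fin (n+1)), ∀ y ∈ Ω,
      dd a b 1 (u y) y * fderiv ℝ u y (Pi.single μ 1) = - a μ (u y) := by
    intro μ y hy
    have hev : (fun y' => dd a b 0 (u y') y') =ᶠ[nhds y] (fun _ => (0:ℂ)) := by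
      refine Filter.eventuallyEq_of_mem (hΩ.mem_nhds hy) (fun z hz => ?_)
      have := himp z hz
      simpa [dd] using this
    have h2 : fderiv ℝ (fun y' => dd a b 0 (u y') y') y = 0 := by
      rw [hev.fderiv_eq]
      exact fderiv_const_apply 0
    have h5 := pd_comp (P_dd ha hb 0) (hud y hy) μ
    have h6 : pd μ (fun y' => dd a b 0 (u y') y') y = 0 := by
      show fderiv ℝ (fun y' => dd a b 0 (u y') y') y (Pi.single μ 1) = 0
      rw [h2]; rfl
    rw [h6] at h5
    have e1 : dW (dd a b 0) (u y) y = dd a b 1 (u y) y := by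
      rw [congrFun (congrFun (dW_dd ha hb 0) (u y)) y]
    have e2 : dX μ (dd a b 0) (u y) y = a μ (u y) := by
      rw [congrFun (congrFun (dX_dd ha hb μ 0) (u y)) y]
      simp
    rw [e1, e2] at h5
    linear_combination -h5
  -- the main induction
  have key : ∀ (μ : Fin (n+1)) (m : ℕ), ∀ y ∈ Ω,
      (pd μ)^[m+1] (fun y' => u y' ^ k) y
        = (-1:ℂ)^(m+1) * NN a b m (fun w => a μ w ^ (m+1) * ((k:ℂ) * w ^ (k-1))) (u y) y
            / dd a b 1 (u y) y ^ (2*m+1) := by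
    intro μ m
    induction m with
    | zero =>
      intro y hy
      rw [Function.iterate_one]
      have h5 := pd_comp (P.ent (fun w => w ^ k) (differentiable_pow k)) (hud y hy) μ
      rw [h5]
      have e1 : dW (fun w (_ : Fin (n+1) → ℝ) => w ^ k) (u y) y
          = (k : ℂ) * (u y) ^ (k-1) := by
        show deriv (fun z => z ^ k) (u y) = _
        rw [deriv_pow_field]
      have e2 : dX μ (fun w (_ : Fin (n+1) → ℝ) => w ^ k) (u y) y = 0 := by
        rw [congrFun (congrFun (dX_ent (n := n) μ (fun w => w ^ k)) (u y)) y]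
      rw [e1, e2]
      have eNN : NN a b 0 (fun w => a μ w ^ (0+1) * ((k:ℂ) * w ^ (k-1))) (u y) y
          = a μ (u y) ^ (0+1) * ((k:ℂ) * (u y) ^ (k-1)) := rfl
      rw [eNN, eq_div_iff (pow_ne_zero _ (hd1 y hy))]
      have hD := hdu μ y hy
      ring_nf
      linear_combination ((k:ℂ) * (u y) ^ (k-1)) * hD
    | succ m ihm =>
      intro y hy
      set hm : ℂ → ℂ := fun w => a μ w ^ (m+1) * ((k:ℂ) * w ^ (k-1)) with hmdef
      have hhm : Differentiable ℂ hm :=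
        ((ha μ).pow _).mul ((differentiable_const _).mul (differentiable_pow _))
      have hPA : P (NN a b m hm) := P_NN ha hb hhm m
      have hev : (pd μ)^[m+1] (fun y' => u y' ^ k) =ᶠ[nhds y]
          (fun y' => (-1:ℂ)^(m+1) * NN a b m hm (u y') y'
            / dd a b 1 (u y') y' ^ (2*m+1)) :=
        Filter.eventuallyEq_of_mem (hΩ.mem_nhds hy) (fun z hz => ihm z hz)
      rw [Function.iterate_succ_apply']
      show fderiv ℝ ((pd μ)^[m+1] fun y' => u y' ^ k) y (Pi.single μ 1) = _
      rw [hev.fderiv_eq]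
      have efun : (fun y' => (-1:ℂ)^(m+1) * NN a b m hm (u y') y'
            / dd a b 1 (u y') y' ^ (2*m+1))
          = (fun y' => (-1:ℂ)^(m+1) * (NN a b m hm (u y') y'
            * (dd a b 1 (u y') y' ^ (2*m+1))⁻¹)) := by
        funext y'; rw [div_eq_mul_inv, mul_assoc]
      rw [efun]
      have hA := hPA.comp_hasFDerivAt (hud y hy).hasFDerivAt
      have hB := (P_dd ha hb 1).comp_hasFDerivAt (hud y hy).hasFDerivAt
      have hBpow : HasFDerivAt (fun y' => dd a b 1 (u y') y' ^ (2*m+1))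
          (((2*m+1 : ℕ) * dd a b 1 (u y) y ^ (2*m+1-1)) •
            (dW (dd a b 1) (u y) y • fderiv ℝ u y + fderiv ℝ (dd a b 1 (u y)) y)) y :=
        (hasDerivAt_pow (2*m+1) (dd a b 1 (u y) y)).comp_hasFDerivAt (f := fun y' => dd a b 1 (u y') y') y hB
      have hne : dd a b 1 (u y) y ^ (2*m+1) ≠ 0 := pow_ne_zero _ (hd1 y hy)
      have hBinv : HasFDerivAt (fun y' => (dd a b 1 (u y') y' ^ (2*m+1))⁻¹)
          ((-((dd a b 1 (u y) y ^ (2*m+1)) ^ 2)⁻¹) •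
            (((2*m+1 : ℕ) * dd a b 1 (u y) y ^ (2*m+1-1)) •
            (dW (dd a b 1) (u y) y • fderiv ℝ u y + fderiv ℝ (dd a b 1 (u y)) y))) y :=
        (hasDerivAt_inv hne).comp_hasFDerivAt (f := fun y' => dd a b 1 (u y') y' ^ (2*m+1)) y hBpow
      have hprod := hA.fun_mul hBinv
      have hG := hprod.const_mul ((-1:ℂ)^(m+1))
      rw [hG.fderiv]
      simp only [ContinuousLinearMap.smul_apply, ContinuousLinearMap.add_apply,
        smul_eq_mul]
      have eD1 : dW (dd a b 1) (u y) y = dd a b 2 (u y) y := by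
        rw [congrFun (congrFun (dW_dd ha hb 1) (u y)) y]
      have eX1 : fderiv ℝ (dd a b 1 (u y)) y (Pi.single μ 1) = deriv (a μ) (u y) := by
        show dX μ (dd a b 1) (u y) y = _
        rw [congrFun (congrFun (dX_dd ha hb μ 1) (u y)) y]
        simp
      have eXA : fderiv ℝ (NN a b m hm (u y)) y (Pi.single μ 1)
          = dX μ (NN a b m hm) (u y) y := rfl
      rw [eD1, eX1, eXA]
      have eh : (fun w => a μ w ^ (m+1+1) * ((k:ℂ) * w ^ (k-1)))
          = fun z => a μ z * hm z := by
        funext z; rw [hmdef]; ring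
      rw [eh]
      have cc := claimC ha hb μ hhm m (u y) y
      have e_N1 : NN a b (m+1) hm (u y) y
          = dW (NN a b m hm) (u y) y * dd a b 1 (u y) y
            - (2 * (m:ℂ) + 1) * (NN a b m hm (u y) y * dd a b 2 (u y) y) := rfl
      rw [e_N1] at cc
      have hDu : fderiv ℝ u y (Pi.single μ 1) = - a μ (u y) / dd a b 1 (u y) y := by
        rw [eq_div_iff (hd1 y hy)]
        linear_combination hdu μ y hy
      rw [hDu]
      have eB : NN a b (m+1) (fun z => a μ z * hm z) (u y) y
          = a μ (u y) * dW (NN a b m hm) (u y) y * dd a b 1 (u y) y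
            - (2 * (m:ℂ) + 1) * (a μ (u y) * NN a b m hm (u y) y * dd a b 2 (u y) y)
            - dd a b 1 (u y) y * (dX μ (NN a b m hm) (u y) y * dd a b 1 (u y) y
              - (2 * (m:ℂ) + 1) * (deriv (a μ) (u y) * NN a b m hm (u y) y)) := by
        linear_combination -cc
      rw [eB]
      have e2m : 2*m+1-1 = 2*m := by omega
      rw [e2m]
      have ht := hd1 y hy
      field_simp
      push_cast
      ring
  -- final assembly
  obtain ⟨q, rfl⟩ : ∃ q, p = q + 1 := ⟨p - 1, by omega⟩
  show (pd 0)^[q+1] (fun y => u y ^ k) x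
      - ∑ j : Fin n, (pd j.succ)^[q+1] (fun y => u y ^ k) x = 0
  rw [key 0 q x hx, Finset.sum_congr rfl fun j _ => key j.succ q x hx]
  have hgg : Differentiable ℂ (fun w => (k:ℂ) * w ^ (k-1)) :=
    (differentiable_const _).mul (differentiable_pow _)
  have H0 : Differentiable ℂ (fun z => a 0 z ^ (q+1) * ((k:ℂ) * z ^ (k-1))) :=
    ((ha 0).pow _).mul hgg
  have Hj : ∀ j : Fin n, Differentiable ℂ (fun z => a j.succ z ^ (q+1) * ((k:ℂ) * z ^ (k-1))) :=
    fun j => ((ha j.succ).pow _).mul hgg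
  have HS : Differentiable ℂ (fun z => ∑ j : Fin n, a j.succ z ^ (q+1) * ((k:ℂ) * z ^ (k-1))) :=
    Differentiable.fun_sum fun j _ => Hj j
  have hzero : (fun z => a 0 z ^ (q+1) * ((k:ℂ) * z ^ (k-1))
      - ∑ j : Fin n, a j.succ z ^ (q+1) * ((k:ℂ) * z ^ (k-1))) = fun _ => (0:ℂ) := by
    funext z
    rw [← Finset.sum_mul, ← sub_mul, hconstraint z, zero_mul]
  have hcomb : NN a b q (fun z => a 0 z ^ (q+1) * ((k:ℂ) * z ^ (k-1))) (u x) x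
      = ∑ j : Fin n, NN a b q (fun z => a j.succ z ^ (q+1) * ((k:ℂ) * z ^ (k-1))) (u x) x := by
    have h1 := congrFun (congrFun (NN_sub ha hb H0 HS q) (u x)) x
    rw [hzero, NN_zero ha hb q] at h1
    have h2 := congrFun (congrFun (NN_sum ha hb Finset.univ
      (fun j => fun z => a j.succ z ^ (q+1) * ((k:ℂ) * z ^ (k-1))) (fun j _ => Hj j) q) (u x)) x
    simp only at h1 h2
    rw [h2] at h1
    linear_combination -h1
  rw [hcomb, Finset.mul_sum, Finset.sum_div]
  exact sub_self _
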